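/- arXiv:1812.09594 — 12 statements merged into one kernel-verified Lean document; each statement's English description precedes it below -/
import Mathlib

section
/- For every positive integer n, every sum-free set A ⊆ {1,...,n} such that 2n+1 is not in (3A) ∪ (4A) satisfies |A| ≤ ⌊(n+1)/3⌋. -/
open Pointwise

theorem sumfree_forbidden_3A4A_max (n : ℕ) (hn : 0 < n) (A : Finset ℕ)
    (hsub : A ⊆ Finset.Icc 1 n)
    (hsf : ∀ x ∈ A, ∀ y ∈ A, x + y ∉ A)
    (hforb : 2 * n + 1 ∉ (A + A + A) ∪ (A + A + A + A)) :
    A.card ≤ (n + 1) / 3 := by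
  rcases A.eq_empty_or_nonempty with rfl | hA
  · simp
  rw [Finset.mem_union, not_or] at hforb
  obtain ⟨h3, h4⟩ := hforb
  have hmem : ∀ a ∈ A, 1 ≤ a ∧ a ≤ n := fun a ha => Finset.mem_Icc.mp (hsub ha)
  have h3' : ∀ a ∈ A, ∀ b ∈ A, ∀ c ∈ A, a + b + c ≠ 2 * n + 1 := by
    intro a ha b hb c hc h
    exact h3 (h ▸ Finset.add_mem_add (Finset.add_mem_add ha hb) hc)
  have h4' : ∀ a ∈ A, ∀ b ∈ A, ∀ c ∈ A, ∀ d ∈ A, a + b + c + d ≠ 2 * n + 1 := by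
    intro a ha b hb c hc d hd h
    exact h4 (h ▸ Finset.add_mem_add (Finset.add_mem_add (Finset.add_mem_add ha hb) hc) hd)
  set S := A + A with hS
  have hSmem : ∀ s ∈ S, 2 ≤ s ∧ s ≤ 2 * n := by
    intro s hs
    rw [hS, Finset.mem_add] at hs
    obtain ⟨a, ha, b, hb, rfl⟩ := hs
    have h1 := hmem a ha
    have h2 := hmem b hb
    omega
  set f : ℕ → ℕ := fun x => 2 * n + 1 - x with hf
  set P3 := A.image f with hP3
  set P4 := S.image f with hP4
  have card3 : P3.card = A.card := by
    apply Finset.card_image_of_injOn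
    intro x hx y hy h
    have := (hmem x hx).2
    have := (hmem y hy).2
    simp only [hf] at h
    omega
  have card4 : P4.card = S.card := by
    apply Finset.card_image_of_injOn
    intro x hx y hy h
    have := (hSmem x hx).2
    have := (hSmem y hy).2
    simp only [hf] at h
    omega
  -- disjointness
  have d12 : Disjoint A S := by
    rw [Finset.disjoint_left]
    intro x hx hx'
    rw [hS, Finset.mem_add] at hx'
    obtain ⟨a, ha, b, hb, rfl⟩ := hx'
    exact hsf a ha b hb hx
  have d3 : Disjoint (A ∪ S) P3 := by
    rw [Finset.disjoint_left]
    intro x hx hx'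
    rw [hP3, Finset.mem_image] at hx'
    obtain ⟨c, hc, rfl⟩ := hx'
    have hc' := hmem c hc
    rcases Finset.mem_union.mp hx with h | h
    · have := (hmem _ h).2
      simp only [hf] at this
      omega
    · rw [hS, Finset.mem_add] at h
      obtain ⟨a, ha, b, hb, hab⟩ := h
      have h1 := hmem a ha
      have h2 := hmem b hb
      exact h3' a ha b hb c hc (by simp only [hf] at hab; omega)
  have d4 : Disjoint (A ∪ S ∪ P3) P4 := by
    rw [Finset.disjoint_left]
    intro x hx hx'
    rw [hP4, Finset.mem_image] at hx'
    obtain ⟨s, hs, rfl⟩ := hx'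
    rw [hS, Finset.mem_add] at hs
    obtain ⟨a, ha, b, hb, rfl⟩ := hs
    have h1 := hmem a ha
    have h2 := hmem b hb
    rcases Finset.mem_union.mp hx with h | h
    · rcases Finset.mem_union.mp h with h | h
      · exact h3' a ha b hb _ h (by simp only [hf]; omega)
      · rw [hS, Finset.mem_add] at h
        obtain ⟨c, hc, d, hd, hcd⟩ := h
        have h5 := hmem c hc
        have h6 := hmem d hd
        exact h4' a ha b hb c hc d hd (by simp only [hf] at hcd; omega)
    · rw [hP3, Finset.mem_image] at h
      obtain ⟨c, hc, hcx⟩ := h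
      have h5 := hmem c hc
      have hcab : c = a + b := by simp only [hf] at hcx; omega
      exact hsf a ha b hb (hcab ▸ hc)
  -- union is inside Icc 1 (2n)
  have hUsub : A ∪ S ∪ P3 ∪ P4 ⊆ Finset.Icc 1 (2 * n) := by
    intro x hx
    rw [Finset.mem_Icc]
    rcases Finset.mem_union.mp hx with h | h
    · rcases Finset.mem_union.mp h with h | h
      · rcases Finset.mem_union.mp h with h | h
        · have := hmem x h; omega
        · have := hSmem x h; omega
      · rw [hP3, Finset.mem_image] at h
        obtain ⟨c, hc, rfl⟩ := h
        have := hmem c hc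
        simp only [hf]
        omega
    · rw [hP4, Finset.mem_image] at h
      obtain ⟨s, hs, rfl⟩ := h
      have := hSmem s hs
      simp only [hf]
      omega
  have hcardU : (A ∪ S ∪ P3 ∪ P4).card = A.card + S.card + A.card + S.card := by
    rw [Finset.card_union_of_disjoint d4, Finset.card_union_of_disjoint d3,
      Finset.card_union_of_disjoint d12, card3, card4]
  have hle : A.card + S.card + A.card + S.card ≤ 2 * n := by
    rw [← hcardU]
    calc (A ∪ S ∪ P3 ∪ P4).card ≤ (Finset.Icc 1 (2 * n)).card := Finset.card_le_card hUsub
    _ = 2 * n := by rw [Nat.card_Icc]; omega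
  have hCD : A.card + A.card - 1 ≤ S.card :=
    cauchy_davenport_add_of_linearOrder_isCancelAdd hA hA
  have hA1 : 1 ≤ A.card := Finset.card_pos.mpr hA
  omega
end

section
/- For every positive integer n, every sum-free set A ⊆ {1,...,n} such that 2n+1 is not representable as a sum of any finite number of (not necessarily distinct) elements of A satisfies |A| ≤ ⌊(n+1)/3⌋. -/
open Pointwise

theorem sumfree_forbidden_sum_max (n : ℕ) (hn : 0 < n) (A : Finset ℕ)
    (hsub : A ⊆ Finset.Icc 1 n)
    (hsf : ∀ x ∈ A, ∀ y ∈ A, x + y ∉ A)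
    (hforb : ∀ (k : ℕ) (f : Fin k → ℕ), (∀ i, f i ∈ A) → ∑ i, f i ≠ 2 * n + 1) :
    A.card ≤ (n + 1) / 3 := by
  obtain rfl | hA := A.eq_empty_or_nonempty
  · simp
  have h3 : ∀ a ∈ A, ∀ b ∈ A, ∀ c ∈ A, a + b + c ≠ 2 * n + 1 := by
    intro a ha b hb c hc h
    refine hforb 3 ![a, b, c] ?_ ?_
    · intro i; fin_cases i <;> simpa
    · rw [Fin.sum_univ_three]; simpa using h
  have h4 : ∀ a ∈ A, ∀ b ∈ A, ∀ c ∈ A, ∀ d ∈ A, a + b + c + d ≠ 2 * n + 1 := by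
    intro a ha b hb c hc d hd h
    refine hforb 4 ![a, b, c, d] ?_ ?_
    · intro i; fin_cases i <;> simpa
    · rw [Fin.sum_univ_four]; simpa using h
  have hmem : ∀ a ∈ A, 1 ≤ a ∧ a ≤ n := by
    intro a ha; have := hsub ha; simpa [Finset.mem_Icc] using this
  set S : Finset ℕ := A + A with hS
  have hSmem : ∀ s ∈ S, 2 ≤ s ∧ s ≤ 2 * n := by
    intro s hs
    rw [hS, Finset.mem_add] at hs
    obtain ⟨x, hx, y, hy, rfl⟩ := hs
    obtain ⟨hx1, hx2⟩ := hmem x hx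
    obtain ⟨hy1, hy2⟩ := hmem y hy
    constructor <;> omega
  set T : Finset ℕ := S.image (fun s => 2 * n + 1 - s) with hT
  set U : Finset ℕ := A.image (fun a => 2 * n + 1 - a) with hU
  -- disjointness
  have hAS : Disjoint A S := by
    rw [Finset.disjoint_left]
    intro a ha haS
    rw [hS, Finset.mem_add] at haS
    obtain ⟨x, hx, y, hy, h⟩ := haS
    exact hsf x hx y hy (h ▸ ha)
  have hAT : Disjoint A T := by
    rw [Finset.disjoint_left]
    intro a ha haT
    rw [hT, Finset.mem_image] at haT
    obtain ⟨s, hs, h⟩ := haT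
    rw [hS, Finset.mem_add] at hs
    obtain ⟨x, hx, y, hy, rfl⟩ := hs
    obtain ⟨hx1, hx2⟩ := hmem x hx
    obtain ⟨hy1, hy2⟩ := hmem y hy
    exact h3 a ha x hx y hy (by omega)
  have hAU : Disjoint A U := by
    rw [Finset.disjoint_left]
    intro a ha haU
    rw [hU, Finset.mem_image] at haU
    obtain ⟨b, hb, h⟩ := haU
    obtain ⟨ha1, ha2⟩ := hmem a ha
    obtain ⟨hb1, hb2⟩ := hmem b hb
    omega
  have hST : Disjoint S T := by
    rw [Finset.disjoint_left]
    intro s hs hsT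
    rw [hT, Finset.mem_image] at hsT
    obtain ⟨s', hs', h⟩ := hsT
    rw [hS, Finset.mem_add] at hs hs'
    obtain ⟨x, hx, y, hy, rfl⟩ := hs
    obtain ⟨u, hu, v, hv, rfl⟩ := hs'
    obtain ⟨hx1, hx2⟩ := hmem x hx
    obtain ⟨hy1, hy2⟩ := hmem y hy
    obtain ⟨hu1, hu2⟩ := hmem u hu
    obtain ⟨hv1, hv2⟩ := hmem v hv
    exact h4 x hx y hy u hu v hv (by omega)
  have hSU : Disjoint S U := by
    rw [Finset.disjoint_left]
    intro s hs hsU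
    rw [hU, Finset.mem_image] at hsU
    obtain ⟨a, ha, h⟩ := hsU
    rw [hS, Finset.mem_add] at hs
    obtain ⟨x, hx, y, hy, rfl⟩ := hs
    obtain ⟨hx1, hx2⟩ := hmem x hx
    obtain ⟨hy1, hy2⟩ := hmem y hy
    obtain ⟨ha1, ha2⟩ := hmem a ha
    exact h3 x hx y hy a ha (by omega)
  have hTU : Disjoint T U := by
    rw [Finset.disjoint_left]
    intro t ht htU
    rw [hT, Finset.mem_image] at ht
    rw [hU, Finset.mem_image] at htU
    obtain ⟨s, hs, rfl⟩ := ht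
    obtain ⟨a, ha, h⟩ := htU
    obtain ⟨hs1, hs2⟩ := hSmem s hs
    obtain ⟨ha1, ha2⟩ := hmem a ha
    have hsa : s = a := by omega
    rw [hsa] at hs
    exact Finset.disjoint_left.mp hAS ha hs
  -- cardinalities
  have hTcard : T.card = S.card := by
    rw [hT]
    apply Finset.card_image_of_injOn
    intro x hx y hy h
    simp only at h
    obtain ⟨hx1, hx2⟩ := hSmem x hx
    obtain ⟨hy1, hy2⟩ := hSmem y hy
    omega
  have hUcard : U.card = A.card := by
    rw [hU]
    apply Finset.card_image_of_injOn
    intro x hx y hy h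
    simp only at h
    obtain ⟨hx1, hx2⟩ := hmem x hx
    obtain ⟨hy1, hy2⟩ := hmem y hy
    omega
  have hScard : A.card + A.card - 1 ≤ S.card :=
    cauchy_davenport_add_of_linearOrder_isCancelAdd hA hA
  -- union is inside Icc 1 (2*n)
  have hsubU : A ∪ S ∪ T ∪ U ⊆ Finset.Icc 1 (2 * n) := by
    intro x hx
    simp only [Finset.mem_union] at hx
    rw [Finset.mem_Icc]
    rcases hx with ((hx | hx) | hx) | hx
    · obtain ⟨h1, h2⟩ := hmem x hx; omega
    · obtain ⟨h1, h2⟩ := hSmem x hx; omega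
    · rw [hT, Finset.mem_image] at hx
      obtain ⟨s, hs, rfl⟩ := hx
      obtain ⟨h1, h2⟩ := hSmem s hs
      omega
    · rw [hU, Finset.mem_image] at hx
      obtain ⟨a, ha, rfl⟩ := hx
      obtain ⟨h1, h2⟩ := hmem a ha
      omega
  have hcard : (A ∪ S ∪ T ∪ U).card ≤ 2 * n := by
    calc (A ∪ S ∪ T ∪ U).card ≤ (Finset.Icc 1 (2 * n)).card := Finset.card_le_card hsubU
    _ = 2 * n := by rw [Nat.card_Icc]; omega
  have hd1 : Disjoint (A ∪ S) T := by
    rw [Finset.disjoint_union_left]; exact ⟨hAT, hST⟩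
  have hd2 : Disjoint (A ∪ S ∪ T) U := by
    rw [Finset.disjoint_union_left, Finset.disjoint_union_left]
    exact ⟨⟨hAU, hSU⟩, hTU⟩
  rw [Finset.card_union_of_disjoint hd2, Finset.card_union_of_disjoint hd1,
    Finset.card_union_of_disjoint hAS, hTcard, hUcard] at hcard
  have hApos : 1 ≤ A.card := Finset.card_pos.mpr hA
  omega
end

section
/- For every positive integer n, the maximum size of a sum-free set A ⊆ {1,...,n} with 2n+1 ∉ ∑A is exactly ⌊(n+1)/3⌋. -/
open Pointwise

theorem max_size_sumfree_forbidden (n : ℕ) (hn : 0 < n) :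
    IsGreatest {m : ℕ | ∃ A : Finset ℕ, A ⊆ Finset.Icc 1 n ∧
      (∀ x ∈ A, ∀ y ∈ A, x + y ∉ A) ∧
      (∀ (k : ℕ) (f : Fin k → ℕ), (∀ i, f i ∈ A) → ∑ i, f i ≠ 2 * n + 1) ∧
      A.card = m} ((n + 1) / 3) := by
  set q := (n + 1) / 3 with hq
  have h3q : 3 * q ≤ n + 1 := by
    rw [mul_comm]; exact Nat.div_mul_le_self (n + 1) 3
  have hqn : q ≤ n := by omega
  constructor
  · -- membership: the set Icc (n - q + 1) n works
    refine ⟨Finset.Icc (n - q + 1) n, Finset.Icc_subset_Icc (by omega) le_rfl, ?_, ?_, ?_⟩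
    · intro x hx y hy hxy
      rw [Finset.mem_Icc] at hx hy hxy
      omega
    · intro k f hf heq
      have hub : ∑ i, f i ≤ k * n := by
        calc ∑ i, f i ≤ ∑ _i : Fin k, n :=
              Finset.sum_le_sum (fun i _ => (Finset.mem_Icc.mp (hf i)).2)
          _ = k * n := by simp [Finset.sum_const, Finset.card_univ, mul_comm]
      have hlb : k * (n - q + 1) ≤ ∑ i, f i := by
        calc k * (n - q + 1) = ∑ _i : Fin k, (n - q + 1) := by
              simp [Finset.sum_const, Finset.card_univ, mul_comm]
          _ ≤ ∑ i, f i := Finset.sum_le_sum (fun i _ => (Finset.mem_Icc.mp (hf i)).1)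
      rw [heq] at hub hlb
      have hk : 3 ≤ k := by
        by_contra hk
        push_neg at hk
        interval_cases k <;> omega
      have : 3 * (n - q + 1) ≤ k * (n - q + 1) := Nat.mul_le_mul_right _ hk
      omega
    · rw [Nat.card_Icc]
      omega
  · -- upper bound
    rintro m ⟨A, hA, hsf, hforb, rfl⟩
    rcases A.eq_empty_or_nonempty with rfl | hne
    · simp
    have hmem : ∀ x ∈ A, 1 ≤ x ∧ x ≤ n := fun x hx => Finset.mem_Icc.mp (hA hx)
    set a := A.min' hne with hadef
    set M := A.max' hne with hMdef
    have ha : a ∈ A := A.min'_mem hne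
    have hM : M ∈ A := A.max'_mem hne
    have sum3 : ∀ x ∈ A, ∀ y ∈ A, ∀ z ∈ A, x + y + z ≠ 2 * n + 1 := by
      intro x hx y hy z hz h
      exact hforb 3 ![x, y, z] (by intro i; fin_cases i <;> simpa)
        (by rw [Fin.sum_univ_three]; simpa using h)
    have sum4 : ∀ x ∈ A, ∀ y ∈ A, ∀ z ∈ A, ∀ w ∈ A, x + y + z + w ≠ 2 * n + 1 := by
      intro x hx y hy z hz w hw h
      exact hforb 4 ![x, y, z, w] (by intro i; fin_cases i <;> simpa)
        (by rw [Fin.sum_univ_four]; simpa using h)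
    set S2 : Finset ℕ := A.image (· + a) ∪ A.image (· + M) with hS2def
    set S3 : Finset ℕ := A.image (fun x => 2 * n + 1 - x) with hS3def
    set S4 : Finset ℕ := S2.image (fun u => 2 * n + 1 - u) with hS4def
    -- decompositions
    have hS2mem : ∀ u ∈ S2, ∃ x ∈ A, ∃ y ∈ A, u = x + y := by
      intro u hu
      rw [hS2def, Finset.mem_union] at hu
      rcases hu with hu | hu <;> rw [Finset.mem_image] at hu
      · obtain ⟨x, hx, rfl⟩ := hu; exact ⟨x, hx, a, ha, rfl⟩
      · obtain ⟨x, hx, rfl⟩ := hu; exact ⟨x, hx, M, hM, rfl⟩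
    have hS2bd : ∀ u ∈ S2, 2 ≤ u ∧ u ≤ 2 * n := by
      intro u hu
      obtain ⟨x, hx, y, hy, rfl⟩ := hS2mem u hu
      have h1 := hmem x hx; have h2 := hmem y hy; omega
    have hS3mem : ∀ u ∈ S3, ∃ x ∈ A, x + u = 2 * n + 1 := by
      intro u hu
      rw [hS3def, Finset.mem_image] at hu
      obtain ⟨x, hx, rfl⟩ := hu
      exact ⟨x, hx, by have := hmem x hx; omega⟩
    have hS3bd : ∀ u ∈ S3, n + 1 ≤ u ∧ u ≤ 2 * n := by
      intro u hu
      obtain ⟨x, hx, hxu⟩ := hS3mem u hu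
      have := hmem x hx; omega
    have hS4mem : ∀ u ∈ S4, ∃ x ∈ A, ∃ y ∈ A, x + y + u = 2 * n + 1 := by
      intro u hu
      rw [hS4def, Finset.mem_image] at hu
      obtain ⟨v, hv, rfl⟩ := hu
      obtain ⟨x, hx, y, hy, rfl⟩ := hS2mem v hv
      have h1 := hmem x hx; have h2 := hmem y hy
      exact ⟨x, hx, y, hy, by omega⟩
    have hS4bd : ∀ u ∈ S4, 1 ≤ u ∧ u ≤ 2 * n - 1 := by
      intro u hu
      obtain ⟨x, hx, y, hy, hxyu⟩ := hS4mem u hu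
      have h1 := hmem x hx; have h2 := hmem y hy; omega
    -- cardinalities
    have hS3card : S3.card = A.card := by
      rw [hS3def]
      apply Finset.card_image_of_injOn
      intro x hx y hy h
      have h1 := hmem x hx; have h2 := hmem y hy
      simp only at h
      omega
    have hS2card : 2 * A.card ≤ S2.card + 1 := by
      have hinter : (A.image (· + a)) ∩ (A.image (· + M)) ⊆ {a + M} := by
        intro u hu
        rw [Finset.mem_inter] at hu
        obtain ⟨h1, h2⟩ := hu
        rw [Finset.mem_image] at h1 h2
        obtain ⟨x, hx, hxu⟩ := h1
        obtain ⟨y, hy, hyu⟩ := h2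
        have hxM : x ≤ M := A.le_max' x hx
        have hay : a ≤ y := A.min'_le y hy
        rw [Finset.mem_singleton]
        omega
      have hci : ((A.image (· + a)) ∩ (A.image (· + M))).card ≤ 1 := by
        calc ((A.image (· + a)) ∩ (A.image (· + M))).card ≤ ({a + M} : Finset ℕ).card :=
              Finset.card_le_card hinter
          _ = 1 := Finset.card_singleton _
      have h1 : (A.image (· + a)).card = A.card :=
        Finset.card_image_of_injective _ (add_left_injective a)
      have h2 : (A.image (· + M)).card = A.card :=
        Finset.card_image_of_injective _ (add_left_injective M)
      have := Finset.card_union_add_card_inter (A.image (· + a)) (A.image (· + M))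
      rw [hS2def]
      omega
    have hS4card : S4.card = S2.card := by
      rw [hS4def]
      apply Finset.card_image_of_injOn
      intro x hx y hy h
      have h1 := hS2bd x hx; have h2 := hS2bd y hy
      simp only at h
      omega
    -- disjointness
    have d12 : Disjoint A S2 := by
      rw [Finset.disjoint_left]
      intro u hu hu'
      obtain ⟨x, hx, y, hy, rfl⟩ := hS2mem u hu'
      exact hsf x hx y hy hu
    have d13 : Disjoint A S3 := by
      rw [Finset.disjoint_left]
      intro u hu hu'
      have h1 := hmem u hu
      have h2 := hS3bd u hu'
      omega
    have d14 : Disjoint A S4 := by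
      rw [Finset.disjoint_left]
      intro u hu hu'
      obtain ⟨x, hx, y, hy, h⟩ := hS4mem u hu'
      exact sum3 x hx y hy u hu h
    have d23 : Disjoint S2 S3 := by
      rw [Finset.disjoint_left]
      intro u hu hu'
      obtain ⟨x, hx, y, hy, rfl⟩ := hS2mem u hu
      obtain ⟨z, hz, hzu⟩ := hS3mem _ hu'
      exact sum3 z hz x hx y hy (by omega)
    have d24 : Disjoint S2 S4 := by
      rw [Finset.disjoint_left]
      intro u hu hu'
      obtain ⟨x, hx, y, hy, rfl⟩ := hS2mem u hu
      obtain ⟨z, hz, w, hw, h⟩ := hS4mem _ hu'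
      exact sum4 z hz w hw x hx y hy (by omega)
    have d34 : Disjoint S3 S4 := by
      rw [Finset.disjoint_left]
      intro u hu hu'
      obtain ⟨x, hx, hxu⟩ := hS3mem u hu
      obtain ⟨y, hy, z, hz, h⟩ := hS4mem u hu'
      have hx' : x = y + z := by omega
      exact hsf y hy z hz (hx' ▸ hx)
    -- union bound
    have hsub : A ∪ S2 ∪ (S3 ∪ S4) ⊆ Finset.Icc 1 (2 * n) := by
      intro u hu
      simp only [Finset.mem_union] at hu
      rw [Finset.mem_Icc]
      rcases hu with (hu | hu) | (hu | hu)
      · have := hmem u hu; omega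
      · have := hS2bd u hu; omega
      · have := hS3bd u hu; omega
      · have := hS4bd u hu; omega
    have hcard1 : (A ∪ S2).card = A.card + S2.card := Finset.card_union_of_disjoint d12
    have hcard2 : (S3 ∪ S4).card = S3.card + S4.card := Finset.card_union_of_disjoint d34
    have dbig : Disjoint (A ∪ S2) (S3 ∪ S4) := by
      rw [Finset.disjoint_union_left]
      constructor
      · rw [Finset.disjoint_union_right]; exact ⟨d13, d14⟩
      · rw [Finset.disjoint_union_right]; exact ⟨d23, d24⟩
    have hcard3 : (A ∪ S2 ∪ (S3 ∪ S4)).card = A.card + S2.card + (S3.card + S4.card) := by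
      rw [Finset.card_union_of_disjoint dbig, hcard1, hcard2]
    have htotal : A.card + S2.card + (S3.card + S4.card) ≤ 2 * n := by
      rw [← hcard3]
      calc (A ∪ S2 ∪ (S3 ∪ S4)).card ≤ (Finset.Icc 1 (2 * n)).card :=
            Finset.card_le_card hsub
        _ = 2 * n := by rw [Nat.card_Icc]; omega
    have hfin : 3 * A.card ≤ n + 1 := by omega
    rw [hq, Nat.le_div_iff_mul_le (by norm_num)]
    omega
end

section
/- For every positive integer n, the maximum size of a set A ⊆ {1,...,n} that is sum-free and satisfies 2n ∉ ∑A is exactly ⌊(n-1)/3⌋. -/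
open Pointwise

/-- Any member of the additive closure of a finset of naturals is a finite sum of its
elements. -/
lemma sum_rep_of_mem_closure {A : Finset ℕ} {x : ℕ}
    (hx : x ∈ AddSubmonoid.closure (A : Set ℕ)) :
    ∃ (k : ℕ) (f : Fin k → ℕ), (∀ i, f i ∈ A) ∧ ∑ i, f i = x := by
  induction hx using AddSubmonoid.closure_induction with
  | mem a ha =>
      exact ⟨1, fun _ => a, fun _ => ha, by simp⟩
  | zero =>
      exact ⟨0, fun i => 0, fun i => i.elim0, by simp⟩
  | add x y hx hy ihx ihy =>
      obtain ⟨k1, f1, hf1, hs1⟩ := ihx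
      obtain ⟨k2, f2, hf2, hs2⟩ := ihy
      refine ⟨k1 + k2, Fin.addCases f1 f2, ?_, ?_⟩
      · intro i
        refine Fin.addCases (motive := fun i => Fin.addCases f1 f2 i ∈ A) ?_ ?_ i
        · intro j; simpa using hf1 j
        · intro j; simpa using hf2 j
      · rw [Fin.sum_univ_add]
        simp [hs1, hs2]

/-- Lower bound for the cardinality of a sumset of naturals. -/
lemma two_mul_card_sub_one_le_card_add (A : Finset ℕ) (hne : A.Nonempty) :
    2 * A.card - 1 ≤ (A + A).card := by
  classical
  set a0 := A.min' hne with ha0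
  set b := A.max' hne with hb
  have ha0A : a0 ∈ A := A.min'_mem hne
  have hbA : b ∈ A := A.max'_mem hne
  set I1 := A.image (fun x => a0 + x) with hI1
  set I2 := (A.erase a0).image (fun x => b + x) with hI2
  have hc1 : I1.card = A.card := Finset.card_image_of_injective _ (add_right_injective a0)
  have hc2 : I2.card = A.card - 1 := by
    rw [hI2, Finset.card_image_of_injective _ (add_right_injective b),
      Finset.card_erase_of_mem ha0A]
  have hdisj : Disjoint I1 I2 := by
    rw [Finset.disjoint_left]
    intro z hz1 hz2
    obtain ⟨x, hx, hxe⟩ := Finset.mem_image.mp hz1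
    obtain ⟨y, hy, hye⟩ := Finset.mem_image.mp hz2
    have hxb : x ≤ b := A.le_max' x hx
    have hy' : y ∈ A := Finset.mem_of_mem_erase hy
    have hyne : y ≠ a0 := Finset.ne_of_mem_erase hy
    have hya : a0 ≤ y := A.min'_le y hy'
    omega
  have hsub : I1 ∪ I2 ⊆ A + A := by
    intro z hz
    rcases Finset.mem_union.mp hz with h | h
    · obtain ⟨x, hx, hxe⟩ := Finset.mem_image.mp h
      exact hxe ▸ Finset.add_mem_add ha0A hx
    · obtain ⟨y, hy, hye⟩ := Finset.mem_image.mp h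
      exact hye ▸ Finset.add_mem_add hbA (Finset.mem_of_mem_erase hy)
  have hle := Finset.card_le_card hsub
  rw [Finset.card_union_of_disjoint hdisj, hc1, hc2] at hle
  have hA1 : 1 ≤ A.card := Finset.card_pos.mpr hne
  omega

/-- If all `f i` lie in `Icc lo hi` then the sum is between `k*lo` and `k*hi`. -/
lemma sum_bounds {k lo hi : ℕ} (f : Fin k → ℕ) (h : ∀ i, f i ∈ Finset.Icc lo hi) :
    k * lo ≤ ∑ i, f i ∧ ∑ i, f i ≤ k * hi := by
  constructor
  · have h1 := Finset.card_nsmul_le_sum Finset.univ f lo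
      (fun i _ => (Finset.mem_Icc.mp (h i)).1)
    simpa [Finset.card_univ, smul_eq_mul] using h1
  · have h1 := Finset.sum_le_card_nsmul Finset.univ f hi
      (fun i _ => (Finset.mem_Icc.mp (h i)).2)
    simpa [Finset.card_univ, smul_eq_mul] using h1

theorem max_size_sumfree_forbidden_2n (n : ℕ) (hn : 0 < n) :
    IsGreatest {m : ℕ | ∃ A : Finset ℕ, A ⊆ Finset.Icc 1 n ∧
      (∀ x ∈ A, ∀ y ∈ A, x + y ∉ A) ∧
      (∀ (k : ℕ) (f : Fin k → ℕ), (∀ i, f i ∈ A) → ∑ i, f i ≠ 2 * n) ∧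
      A.card = m} ((n - 1) / 3) := by
  classical
  have h3 : 3 * ((n - 1) / 3) ≤ n - 1 := by
    have := Nat.div_mul_le_self (n - 1) 3
    omega
  constructor
  · -- membership: the set Icc (n - m) (n - 1) works, where m = (n-1)/3
    set m := (n - 1) / 3 with hm
    refine ⟨Finset.Icc (n - m) (n - 1), ?_, ?_, ?_, ?_⟩
    · intro x hx
      rw [Finset.mem_Icc] at *
      omega
    · intro x hx y hy hxy
      rw [Finset.mem_Icc] at *
      omega
    · intro k f hf hs
      obtain ⟨hlo, hhi⟩ := sum_bounds f hf
      rcases le_or_gt k 2 with hk | hk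
      · have h1 : k * (n - 1) ≤ 2 * (n - 1) := Nat.mul_le_mul_right _ hk
        omega
      · have h1 : 3 * (n - m) ≤ k * (n - m) := Nat.mul_le_mul_right _ hk
        omega
    · rw [Nat.card_Icc]
      omega
  · -- upper bound
    rintro m' ⟨A, hsub, hsf, hns, rfl⟩
    by_contra hgt
    push_neg at hgt
    have h3M : n ≤ 3 * A.card := by
      have := (Nat.div_lt_iff_lt_mul (by norm_num : (0:ℕ) < 3)).mp hgt
      omega
    set M := A.card with hM
    have h2n : (2 * n) ∉ AddSubmonoid.closure (A : Set ℕ) := by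
      intro h
      obtain ⟨k, f, hf, hs⟩ := sum_rep_of_mem_closure h
      exact hns k f hf hs
    have hclA : ∀ a ∈ A, (a : ℕ) ∈ AddSubmonoid.closure (A : Set ℕ) := fun a ha =>
      AddSubmonoid.subset_closure ha
    have hbd : ∀ a ∈ A, 1 ≤ a ∧ a ≤ n := by
      intro a ha
      have := hsub ha
      rwa [Finset.mem_Icc] at this
    have hMpos : 0 < M := by omega
    have hne : A.Nonempty := Finset.card_pos.mp hMpos
    have hnA : n ∉ A := by
      intro h
      apply h2n
      have h1 := hclA n h
      have h2 := add_mem h1 h1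
      rwa [two_mul]
    set b := A.max' hne with hb
    have hbA : b ∈ A := A.max'_mem hne
    have hble : ∀ a ∈ A, a ≤ b := fun a ha => A.le_max' a ha
    have hb1 : b ≤ n - 1 := by
      have h1 := (hbd b hbA).2
      have h2 : b ≠ n := fun h => hnA (h ▸ hbA)
      omega
    have hbpos : 1 ≤ b := (hbd b hbA).1
    have hn2 : 2 ≤ n := by
      by_contra h
      obtain ⟨a, ha⟩ := hne
      have h1 := hbd a ha
      have h2 : a = n := by omega
      exact hnA (h2 ▸ ha)
    -- the main sets
    set T := (A.filter fun a => 2 * b + a ≤ 2 * n).image (fun a => 2 * b + a) with hT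
    set Z := (({0} : Finset ℕ) ∪ A ∪ (A + A)) ∪ T with hZ
    have hAAmem : ∀ z ∈ A + A, 2 ≤ z ∧ z ≤ 2 * b := by
      intro z hz
      obtain ⟨x, hx, y, hy, hxy⟩ := Finset.mem_add.mp hz
      have h1 := hbd x hx
      have h2 := hbd y hy
      have h3 := hble x hx
      have h4 := hble y hy
      omega
    have hTmem : ∀ z ∈ T, 2 * b + 1 ≤ z ∧ z ≤ 2 * n := by
      intro z hz
      obtain ⟨a, ha, hae⟩ := Finset.mem_image.mp hz
      rw [Finset.mem_filter] at ha
      have := hbd a ha.1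
      omega
    have hZle : ∀ z ∈ Z, z ≤ 2 * n := by
      intro z hz
      rw [hZ, Finset.mem_union, Finset.mem_union, Finset.mem_union] at hz
      rcases hz with ((h | h) | h) | h
      · simp only [Finset.mem_singleton] at h; omega
      · have := (hbd z h).2; omega
      · have := (hAAmem z h).2; omega
      · exact (hTmem z h).2
    have hZcl : ∀ z ∈ Z, z ∈ AddSubmonoid.closure (A : Set ℕ) := by
      intro z hz
      rw [hZ, Finset.mem_union, Finset.mem_union, Finset.mem_union] at hz
      rcases hz with ((h | h) | h) | h
      · simp only [Finset.mem_singleton] at h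
        exact h ▸ zero_mem _
      · exact hclA z h
      · obtain ⟨x, hx, y, hy, hxy⟩ := Finset.mem_add.mp h
        exact hxy ▸ add_mem (hclA x hx) (hclA y hy)
      · obtain ⟨a, ha, hae⟩ := Finset.mem_image.mp h
        rw [Finset.mem_filter] at ha
        have hmem : b + b + a ∈ AddSubmonoid.closure (A : Set ℕ) :=
          add_mem (add_mem (hclA b hbA) (hclA b hbA)) (hclA a ha.1)
        rw [← hae, two_mul]
        exact hmem
    -- cardinality of Z
    have hd1 : Disjoint ({0} : Finset ℕ) A := by
      rw [Finset.disjoint_left]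
      intro z hz hz'
      simp only [Finset.mem_singleton] at hz
      have := (hbd z hz').1
      omega
    have hd2 : Disjoint (({0} : Finset ℕ) ∪ A) (A + A) := by
      rw [Finset.disjoint_left]
      intro z hz hz'
      obtain ⟨x, hx, y, hy, hxy⟩ := Finset.mem_add.mp hz'
      rcases Finset.mem_union.mp hz with h | h
      · simp only [Finset.mem_singleton] at h
        have := hbd x hx
        have := hbd y hy
        omega
      · exact hsf x hx y hy (hxy ▸ h)
    have hd3 : Disjoint ((({0} : Finset ℕ) ∪ A) ∪ (A + A)) T := by
      rw [Finset.disjoint_left]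
      intro z hz hz'
      have hT1 := (hTmem z hz').1
      rcases Finset.mem_union.mp hz with h | h
      · rcases Finset.mem_union.mp h with h' | h'
        · simp only [Finset.mem_singleton] at h'
          omega
        · have := hble z h'
          omega
      · have := (hAAmem z h).2
        omega
    have hcZ : Z.card = 1 + M + (A + A).card + T.card := by
      rw [hZ, Finset.card_union_of_disjoint hd3, Finset.card_union_of_disjoint hd2,
        Finset.card_union_of_disjoint hd1]
      simp [hM]
    have hAA : 2 * M - 1 ≤ (A + A).card := two_mul_card_sub_one_le_card_add A hne
    -- the mirror set
    set W := Z.image (fun z => 2 * n - z) with hW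
    have hWcard : W.card = Z.card := by
      rw [hW]
      apply Finset.card_image_of_injOn
      intro x hx y hy hxy
      have h1 := hZle x hx
      have h2 := hZle y hy
      have hxy' : 2 * n - x = 2 * n - y := hxy
      omega
    have hdisjZW : Disjoint Z W := by
      rw [Finset.disjoint_left]
      intro z hz hzW
      obtain ⟨w, hw, hwe⟩ := Finset.mem_image.mp hzW
      apply h2n
      have hwle := hZle w hw
      have hzw : z + w = 2 * n := by omega
      rw [← hzw]
      exact add_mem (hZcl z hz) (hZcl w hw)
    have hZWsub : Z ∪ W ⊆ (Finset.range (2 * n + 1)).erase n := by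
      intro x hx
      rw [Finset.mem_erase, Finset.mem_range]
      have hxZn : ∀ y, y ∈ Z → y ≠ n := by
        intro y hy hyn
        apply h2n
        have h1 := hZcl y hy
        rw [hyn] at h1
        have h2 := add_mem h1 h1
        rwa [two_mul]
      rcases Finset.mem_union.mp hx with h | h
      · exact ⟨hxZn x h, by have := hZle x h; omega⟩
      · obtain ⟨w, hw, hwe⟩ := Finset.mem_image.mp h
        have hwle := hZle w hw
        constructor
        · intro hxn
          have hwn : w = n := by omega
          exact hxZn w hw hwn
        · omega
    have hcard_target : ((Finset.range (2 * n + 1)).erase n).card = 2 * n := by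
      rw [Finset.card_erase_of_mem (Finset.mem_range.mpr (by omega)), Finset.card_range]
      omega
    have hZWcard : (Z ∪ W).card = 2 * Z.card := by
      rw [Finset.card_union_of_disjoint hdisjZW, hWcard]
      ring
    have hle2 : 2 * Z.card ≤ 2 * n := by
      have := Finset.card_le_card hZWsub
      rwa [hZWcard, hcard_target] at this
    have hTcard0 : T.card = 0 := by omega
    have hZn : Z.card = n := by omega
    have hTempty : T = ∅ := Finset.card_eq_zero.mp hTcard0
    have heq : Z ∪ W = (Finset.range (2 * n + 1)).erase n := by
      apply Finset.eq_of_subset_of_card_le hZWsub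
      rw [hZWcard, hcard_target, hZn]
    have h1mem : (1 : ℕ) ∈ Z ∪ W := by
      rw [heq, Finset.mem_erase, Finset.mem_range]
      omega
    have h1A : (1 : ℕ) ∈ A := by
      rcases Finset.mem_union.mp h1mem with h | h
      · rw [hZ, Finset.mem_union, Finset.mem_union, Finset.mem_union] at h
        rcases h with ((h' | h') | h') | h'
        · simp only [Finset.mem_singleton] at h'
          omega
        · exact h'
        · have := (hAAmem 1 h').1
          omega
        · rw [hTempty] at h'
          exact absurd h' (Finset.notMem_empty _)
      · obtain ⟨w, hw, hwe⟩ := Finset.mem_image.mp h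
        have hwle := hZle w hw
        have hw2 : w = 2 * n - 1 := by omega
        exfalso
        rw [hZ, Finset.mem_union, Finset.mem_union, Finset.mem_union] at hw
        rcases hw with ((h' | h') | h') | h'
        · simp only [Finset.mem_singleton] at h'
          omega
        · have := (hbd w h').2
          omega
        · have := (hAAmem w h').2
          omega
        · rw [hTempty] at h'
          exact absurd h' (Finset.notMem_empty _)
    have hfinal : 2 * b + 1 ∈ T :=
      Finset.mem_image.mpr ⟨1, Finset.mem_filter.mpr ⟨h1A, by omega⟩, rfl⟩
    rw [hTempty] at hfinal
    exact absurd hfinal (Finset.notMem_empty _)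
end

section
/- For every positive integer n and every nonempty sum-free set A ⊆ {1,...,n} with min(A) > n/3 and 2n+1 ∉ 3A, it holds that |A| ≤ ⌊(n+1)/3⌋. -/
open Pointwise

theorem sumfree_min_large_forbidden_3A (n : ℕ) (hn : 0 < n) (A : Finset ℕ)
    (hsub : A ⊆ Finset.Icc 1 n) (hne : A.Nonempty)
    (hmin : 3 * A.min' hne > n)
    (hsf : ∀ x ∈ A, ∀ y ∈ A, x + y ∉ A)
    (hforb : 2 * n + 1 ∉ A + A + A) :
    A.card ≤ (n + 1) / 3 := by
  classical
  rw [Nat.le_div_iff_mul_le (by norm_num : (0:ℕ) < 3)]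
  set a := A.min' hne with ha_def
  have haA : a ∈ A := A.min'_mem hne
  have hmin' : ∀ x ∈ A, a ≤ x := fun x hx => A.min'_le x hx
  have hb : ∀ x ∈ A, 1 ≤ x ∧ x ≤ n := by
    intro x hx
    have := hsub hx
    rwa [Finset.mem_Icc] at this
  have h3a : n < 3 * a := hmin
  have hab := hb a haA
  have hforb' : ∀ x ∈ A, ∀ y ∈ A, ∀ z ∈ A, x + y + z ≠ 2 * n + 1 := by
    intro x hx y hy z hz hE
    exact hforb (hE ▸ Finset.add_mem_add (Finset.add_mem_add hx hy) hz)
  have hadd : ∀ x ∈ A, x + a ∉ A := fun x hx => hsf x hx a haA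
  set f : ℕ → ℕ := fun x =>
    if 2 * x ≤ n then 2 * x
    else if 2 * n + 1 + a - 2 * x ∈ A then
      (if 2 * x ≤ n + 2 * a then 2 * x - 2 * a else 2 * n + 1 + 2 * a - 2 * x)
    else 2 * n + 1 - 2 * x with hf_def
  -- key properties of f on A
  have hfA : ∀ x ∈ A, (1 ≤ f x ∧ f x ≤ n) ∧ f x ∉ A ∧ ∀ z ∈ A, f x ≠ z - a := by
    intro x hx
    obtain ⟨hx1, hxn⟩ := hb x hx
    have hax := hmin' x hx
    by_cases hc1 : 2 * x ≤ n
    · have hfx : f x = 2 * x := by simp only [hf_def]; rw [if_pos hc1]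
      rw [hfx]
      refine ⟨⟨by omega, by omega⟩, ?_, ?_⟩
      · intro h
        exact hsf x hx x hx (by rwa [two_mul] at h)
      · intro z hz h
        have := hmin' z hz
        have := (hb z hz).2
        omega
    · by_cases hc2 : 2 * n + 1 + a - 2 * x ∈ A
      · have hz1 := hmin' _ hc2
        have hz1b := hb _ hc2
        by_cases hc3 : 2 * x ≤ n + 2 * a
        · have hfx : f x = 2 * x - 2 * a := by
            simp only [hf_def]; rw [if_neg hc1, if_pos hc2, if_pos hc3]
          rw [hfx]
          refine ⟨⟨by omega, by omega⟩, ?_, ?_⟩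
          · intro h
            exact hforb' _ h _ hc2 a haA (by omega)
          · intro z hz h
            have := hmin' z hz
            have := (hb z hz).2
            omega
        · have hfx : f x = 2 * n + 1 + 2 * a - 2 * x := by
            simp only [hf_def]; rw [if_neg hc1, if_pos hc2, if_neg hc3]
          rw [hfx]
          refine ⟨⟨by omega, by omega⟩, ?_, ?_⟩
          · intro h
            apply hadd _ hc2
            have hE : 2 * n + 1 + 2 * a - 2 * x = (2 * n + 1 + a - 2 * x) + a := by omega
            rwa [hE] at h
          · intro z hz h
            have := hmin' z hz
            have := (hb z hz).2
            omega
      · have hfx : f x = 2 * n + 1 - 2 * x := by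
          simp only [hf_def]; rw [if_neg hc1, if_neg hc2]
        rw [hfx]
        refine ⟨⟨by omega, by omega⟩, ?_, ?_⟩
        · intro h
          exact hforb' x hx x hx _ h (by omega)
        · intro z hz h
          have haz := hmin' z hz
          have hzb := (hb z hz).2
          apply hc2
          have hE : z = 2 * n + 1 + a - 2 * x := by omega
          rwa [hE] at hz
  -- injectivity of f on A
  have hinj : Set.InjOn f A := by
    intro x hx x' hx' h
    obtain ⟨hx1, hxn⟩ := hb x hx
    obtain ⟨hx1', hxn'⟩ := hb x' hx'
    have hax := hmin' x hx
    have hax' := hmin' x' hx'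
    simp only [hf_def] at h
    split_ifs at h with h1 h2 h3 h4 h5 h6 h7 h8 h9 h10 h11 h12 h13 h14
    all_goals
      first
      | omega
      | (exfalso
         first
         | (apply hadd x hx
            have hE : x' = x + a := by omega
            rwa [hE] at hx')
         | (apply hadd x' hx'
            have hE : x = x' + a := by omega
            rwa [hE] at hx))
  -- the three pairwise disjoint sets
  set S2 : Finset ℕ := (A.erase a).image (fun z => z - a) with hS2_def
  set S3 : Finset ℕ := A.image f with hS3_def
  have hS2card : S2.card = A.card - 1 := by
    rw [hS2_def, Finset.card_image_of_injOn, Finset.card_erase_of_mem haA]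
    intro z hz z' hz' hE
    have h1 := hmin' z (Finset.mem_of_mem_erase hz)
    have h2 := hmin' z' (Finset.mem_of_mem_erase hz')
    simp only at hE
    omega
  have hS3card : S3.card = A.card := by
    rw [hS3_def, Finset.card_image_of_injOn hinj]
  have hd12 : Disjoint A S2 := by
    rw [Finset.disjoint_left]
    intro w hw hw2
    obtain ⟨z, hz, hzw⟩ := Finset.mem_image.mp hw2
    have hzA := Finset.mem_of_mem_erase hz
    have hzne := Finset.ne_of_mem_erase hz
    have haz := hmin' z hzA
    apply hadd w hw
    have hE : z = w + a := by omega
    rwa [hE] at hzA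
  have hd13 : Disjoint A S3 := by
    rw [Finset.disjoint_left]
    intro w hw hw3
    obtain ⟨x, hx, hfx⟩ := Finset.mem_image.mp hw3
    exact (hfA x hx).2.1 (hfx ▸ hw)
  have hd23 : Disjoint S2 S3 := by
    rw [Finset.disjoint_left]
    intro w hw2 hw3
    obtain ⟨z, hz, hzw⟩ := Finset.mem_image.mp hw2
    obtain ⟨x, hx, hfx⟩ := Finset.mem_image.mp hw3
    have hzA := Finset.mem_of_mem_erase hz
    exact (hfA x hx).2.2 z hzA (by rw [hfx, ← hzw])
  have hdU : Disjoint (A ∪ S2) S3 := Finset.disjoint_union_left.mpr ⟨hd13, hd23⟩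
  have hUcard : (A ∪ S2 ∪ S3).card = A.card + S2.card + S3.card := by
    rw [Finset.card_union_of_disjoint hdU, Finset.card_union_of_disjoint hd12]
  have hUsub : A ∪ S2 ∪ S3 ⊆ Finset.Icc 1 n := by
    intro w hw
    rcases Finset.mem_union.mp hw with hw' | hw3
    · rcases Finset.mem_union.mp hw' with hw1 | hw2
      · exact hsub hw1
      · obtain ⟨z, hz, hzw⟩ := Finset.mem_image.mp hw2
        have hzA := Finset.mem_of_mem_erase hz
        have hzne := Finset.ne_of_mem_erase hz
        have haz := hmin' z hzA
        have := (hb z hzA).2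
        rw [Finset.mem_Icc]
        omega
    · obtain ⟨x, hx, hfx⟩ := Finset.mem_image.mp hw3
      have := (hfA x hx).1
      rw [Finset.mem_Icc]
      omega
  have hle : (A ∪ S2 ∪ S3).card ≤ n := by
    have := Finset.card_le_card hUsub
    rwa [Nat.card_Icc, show n + 1 - 1 = n by omega] at this
  have hk1 : 1 ≤ A.card := Finset.card_pos.mpr hne
  omega
end

section
/- For every ε > 0 and every sufficiently large integer n, if A ⊆ {1,...,n} has size |A| ≥ (2/3 - ε)·n and 2n+2 ∉ 3A, then |A ∩ (2n/3, n]| ≤ 3εn. -/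
open Pointwise

theorem stability_3A (ε : ℝ) (hε : 0 < ε) :
    ∃ N : ℕ, ∀ n : ℕ, N ≤ n → ∀ A : Finset ℕ, A ⊆ Finset.Icc 1 n →
      (2 / 3 - ε) * n ≤ (A.card : ℝ) →
      2 * n + 2 ∉ A + A + A →
      ((A.filter (fun x => 2 * n < 3 * x ∧ x ≤ n)).card : ℝ) ≤ 3 * ε * n := by
  obtain ⟨M, hM⟩ := exists_nat_ge (2/ε)
  refine ⟨max 4 M, fun n hn A hA hcard hsum => ?_⟩
  have hn4 : 4 ≤ n := le_trans (le_max_left _ _) hn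
  have hnε : 2/ε ≤ (n:ℝ) := hM.trans (by exact_mod_cast le_trans (le_max_right _ _) hn)
  set B := A.filter (fun x => 2 * n < 3 * x ∧ x ≤ n) with hB
  by_cases hBe : B = ∅
  · rw [hBe]; simp; positivity
  · have hBne : B.Nonempty := Finset.nonempty_iff_ne_empty.2 hBe
    set b := B.max' hBne with hb
    have hbB : b ∈ B := B.max'_mem hBne
    obtain ⟨hbA, hb1, hb2⟩ : b ∈ A ∧ 2*n < 3*b ∧ b ≤ n := by
      simpa [hB, Finset.mem_filter] using hbB
    set I := Finset.Icc (n+2-b) n with hI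
    have hInotA : ∀ a ∈ A ∩ I, (2*n+2-b-a) ∈ I ∧ (2*n+2-b-a) ∉ A := by
      intro a ha
      rw [Finset.mem_inter, hI, Finset.mem_Icc] at ha
      obtain ⟨haA, ha1, ha2⟩ := ha
      constructor
      · rw [hI, Finset.mem_Icc]; omega
      · intro hcon
        apply hsum
        have heq : 2*n+2 = a + (2*n+2-b-a) + b := by omega
        rw [heq]
        exact Finset.add_mem_add (Finset.add_mem_add haA hcon) hbA
    have hinj : ((A ∩ I).card) ≤ ((I \ A).card) := by
      apply Finset.card_le_card_of_injOn (fun a => 2*n+2-b-a)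
      · intro a ha
        obtain ⟨h1, h2⟩ := hInotA a ha
        rw [Finset.mem_coe, Finset.mem_sdiff]; exact ⟨h1, h2⟩
      · intro a ha a' ha' h
        rw [Finset.mem_coe, Finset.mem_inter, hI, Finset.mem_Icc] at ha ha'
        simp only at h
        omega
    have hIcard : I.card = b - 1 := by
      rw [hI, Nat.card_Icc]; omega
    have hsplit : (A ∩ I).card + (I \ A).card = I.card := by
      rw [Finset.inter_comm]
      exact Finset.card_inter_add_card_sdiff I A
    have hkey : 2 * (A ∩ I).card + 1 ≤ b := by omega
    have hAsplit : A.card ≤ (n + 1 - b) + (A ∩ I).card := by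
      have hsub : A ⊆ Finset.Icc 1 (n+1-b) ∪ (A ∩ I) := by
        intro x hx
        have hxIcc := hA hx
        rw [Finset.mem_Icc] at hxIcc
        rcases Nat.lt_or_ge x (n+2-b) with h | h
        · exact Finset.mem_union_left _ (Finset.mem_Icc.2 ⟨hxIcc.1, by omega⟩)
        · refine Finset.mem_union_right _ (Finset.mem_inter.2 ⟨hx, ?_⟩)
          rw [hI, Finset.mem_Icc]
          exact ⟨h, hxIcc.2⟩
      calc A.card ≤ (Finset.Icc 1 (n+1-b) ∪ (A ∩ I)).card := Finset.card_le_card hsub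
        _ ≤ (Finset.Icc 1 (n+1-b)).card + (A ∩ I).card := Finset.card_union_le _ _
        _ = (n+1-b) + (A ∩ I).card := by rw [Nat.card_Icc]; omega
    have hbreal : (b:ℝ) ≤ 2*n/3 + 2*ε*n + 1 := by
      have h1 : (A.card : ℝ) ≤ ((n + 1 - b : ℕ) : ℝ) + ((A ∩ I).card : ℝ) := by
        exact_mod_cast hAsplit
      have hble : b ≤ n + 1 := by omega
      have h2 : ((n+1-b : ℕ) : ℝ) = (n:ℝ) + 1 - b := by
        push_cast [Nat.cast_sub hble]; ring
      have h3 : 2 * ((A ∩ I).card : ℝ) + 1 ≤ (b:ℝ) := by exact_mod_cast hkey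
      rw [h2] at h1
      nlinarith [hcard]
    have hBsub : B ⊆ Finset.Ioc (2*n/3) b := by
      intro x hx
      have hx' := hx
      rw [hB, Finset.mem_filter] at hx'
      obtain ⟨hxA, hx1, hx2⟩ := hx'
      rw [Finset.mem_Ioc]
      exact ⟨by omega, B.le_max' x hx⟩
    have hBcard : B.card ≤ b - 2*n/3 := by
      calc B.card ≤ (Finset.Ioc (2*n/3) b).card := Finset.card_le_card hBsub
        _ = b - 2*n/3 := Nat.card_Ioc _ _
    have hLreal : (2*(n:ℝ) - 2)/3 ≤ ((2*n/3 : ℕ) : ℝ) := by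
      have hdiv : 2*n ≤ 3 * (2*n/3) + 2 := by omega
      have hdiv' : (2*(n:ℝ)) ≤ 3 * ((2*n/3 : ℕ) : ℝ) + 2 := by exact_mod_cast hdiv
      linarith
    have hfin : (B.card : ℝ) ≤ (b:ℝ) - ((2*n/3 : ℕ):ℝ) := by
      have hle : 2*n/3 ≤ b := by omega
      calc (B.card : ℝ) ≤ ((b - 2*n/3 : ℕ) : ℝ) := by exact_mod_cast hBcard
        _ = (b:ℝ) - ((2*n/3:ℕ):ℝ) := by rw [Nat.cast_sub hle]
    have hεn : (5:ℝ)/3 ≤ ε * n := by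
      rw [div_le_iff₀ hε] at hnε
      nlinarith
    calc (B.card : ℝ) ≤ (b:ℝ) - ((2*n/3:ℕ):ℝ) := hfin
      _ ≤ (2*n/3 + 2*ε*n + 1) - (2*(n:ℝ) - 2)/3 := by linarith
      _ = 2*ε*n + 5/3 := by ring
      _ ≤ 3*ε*n := by nlinarith
end

section
/- For integers t ≥ 1, let a set T ⊆ {0,...,2t-1} satisfy 0 ∈ T, |T| = t, and 2t-1 ∉ 3T. Then for every ℓ ∈ {0,...,t-1}, exactly one of ℓ and 2t-1-ℓ belongs to T. -/
open Pointwise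

theorem special_set_exactly_one (t : ℕ) (ht : 1 ≤ t) (T : Finset ℕ)
    (hsub : T ⊆ Finset.range (2 * t)) (h0 : 0 ∈ T) (hcard : T.card = t)
    (hforb : 2 * t - 1 ∉ T + T + T) :
    ∀ ℓ < t, Xor' (ℓ ∈ T) (2 * t - 1 - ℓ ∈ T) := by
  -- key: no two elements of T sum to 2t-1
  have hpair : ∀ a ∈ T, ∀ b ∈ T, a + b ≠ 2 * t - 1 := by
    intro a ha b hb hab
    apply hforb
    have : a + b + 0 ∈ T + T + T :=
      Finset.add_mem_add (Finset.add_mem_add ha hb) h0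
    simpa [hab] using this
  -- the folding map
  set f : ℕ → ℕ := fun x => min x (2 * t - 1 - x) with hf
  have hinj : Set.InjOn f T := by
    intro a ha b hb hab
    have ha2 : a < 2 * t := Finset.mem_range.mp (hsub ha)
    have hb2 : b < 2 * t := Finset.mem_range.mp (hsub hb)
    have hne : a + b ≠ 2 * t - 1 := hpair a ha b hb
    simp only [hf] at hab
    omega
  have himage : T.image f = Finset.range t := by
    apply Finset.eq_of_subset_of_card_le
    · intro y hy
      obtain ⟨x, hx, rfl⟩ := Finset.mem_image.mp hy
      have hx2 : x < 2 * t := Finset.mem_range.mp (hsub hx)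
      simp only [hf, Finset.mem_range]
      omega
    · rw [Finset.card_range, Finset.card_image_of_injOn hinj, hcard]
  intro ℓ hℓ
  have hℓ' : ℓ ∈ T.image f := by rw [himage]; exact Finset.mem_range.mpr hℓ
  obtain ⟨x, hx, hxℓ⟩ := Finset.mem_image.mp hℓ'
  have hx2 : x < 2 * t := Finset.mem_range.mp (hsub hx)
  simp only [hf] at hxℓ
  have hnotboth : ¬(ℓ ∈ T ∧ 2 * t - 1 - ℓ ∈ T) := by
    rintro ⟨h1, h2⟩
    exact hpair ℓ h1 _ h2 (by omega)
  have hcase : x = ℓ ∨ x = 2 * t - 1 - ℓ := by omega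
  rcases hcase with rfl | rfl
  · exact Or.inl ⟨hx, fun h => hnotboth ⟨hx, h⟩⟩
  · exact Or.inr ⟨hx, fun h => hnotboth ⟨h, hx⟩⟩
end

section
/- For integers t ≥ 1, let T ⊆ {0,...,2t-1} satisfy 0 ∈ T, |T| = t, and 2t-1 ∉ 3T. Then T is closed under addition within the range: for all ℓ₁, ℓ₂ ∈ T with ℓ₁ + ℓ₂ ≤ 2t-1, we have ℓ₁ + ℓ₂ ∈ T. -/
open Pointwise

theorem special_set_closed_under_addition (t : ℕ) (ht : 1 ≤ t) (T : Finset ℕ)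
    (hsub : T ⊆ Finset.range (2 * t)) (h0 : 0 ∈ T) (hcard : T.card = t)
    (hforb : 2 * t - 1 ∉ T + T + T) :
    ∀ a ∈ T, ∀ b ∈ T, a + b ≤ 2 * t - 1 → a + b ∈ T := by
  -- key: image of T under x ↦ 2t-1-x equals complement of T in range (2t)
  have hmem : ∀ x ∈ T, x < 2 * t := fun x hx => Finset.mem_range.mp (hsub hx)
  have himg : T.image (fun x => 2 * t - 1 - x) = Finset.range (2 * t) \ T := by
    apply Finset.eq_of_subset_of_card_le
    · intro y hy
      rcases Finset.mem_image.mp hy with ⟨x, hx, rfl⟩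
      have hx2 := hmem x hx
      rw [Finset.mem_sdiff, Finset.mem_range]
      constructor
      · omega
      · intro hcontra
        apply hforb
        have : x + (2 * t - 1 - x) + 0 ∈ T + T + T :=
          Finset.add_mem_add (Finset.add_mem_add hx hcontra) h0
        have he : x + (2 * t - 1 - x) + 0 = 2 * t - 1 := by omega
        rwa [he] at this
    · have h1 : (Finset.range (2 * t) \ T).card = t := by
        rw [Finset.card_sdiff_of_subset hsub, Finset.card_range, hcard]; omega
      have h2 : (T.image (fun x => 2 * t - 1 - x)).card = t := by
        rw [Finset.card_image_of_injOn, hcard]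
        intro a ha b hb hab
        have := hmem a ha; have := hmem b hb
        simp only at hab
        omega
      omega
  intro a ha b hb hab
  by_contra hc
  have : a + b ∈ Finset.range (2 * t) \ T := by
    rw [Finset.mem_sdiff, Finset.mem_range]
    exact ⟨by omega, hc⟩
  rw [← himg, Finset.mem_image] at this
  rcases this with ⟨c, hcT, hce⟩
  apply hforb
  have hc2 := hmem c hcT
  have : a + b + c ∈ T + T + T := Finset.add_mem_add (Finset.add_mem_add ha hb) hcT
  have he : a + b + c = 2 * t - 1 := by omega
  rwa [he] at this
end

section
/- For integers t ≥ 1, let T ⊆ {0,...,2t-1} satisfy 0 ∈ T, |T| = t, and 2t-1 ∉ 3T. Then T is t-special, i.e., it additionally satisfies {0,...,2t-1+min(T)} \ (2t-1-T) ⊆ T+T. -/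
open Pointwise

/-- A set `T ⊆ {0, …, 2t-1}` is `t`-special if `|T| = t`, `2t-1 ∉ 3T`, and
`[0, 2t-1 + min T] \ (2t-1 - T) ⊆ T + T`. -/
def IsSpecial (t : ℕ) (T : Finset ℕ) : Prop :=
  T.card = t ∧
  2 * t - 1 ∉ T + T + T ∧
  ∀ x ≤ 2 * t - 1 + T.min.untopD 0, (∀ y ∈ T, 2 * t - 1 - y ≠ x) → x ∈ T + T

theorem special_of_zero_mem (t : ℕ) (ht : 1 ≤ t) (T : Finset ℕ)
    (hsub : T ⊆ Finset.range (2 * t)) (h0 : 0 ∈ T) (hcard : T.card = t)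
    (hforb : 2 * t - 1 ∉ T + T + T) :
    IsSpecial t T := by
  have hlt : ∀ y ∈ T, y < 2 * t := fun y hy => Finset.mem_range.mp (hsub hy)
  have hTT : 2 * t - 1 ∉ T + T := fun h => hforb (by
    rw [Finset.mem_add]
    exact ⟨2 * t - 1, h, 0, h0, by omega⟩)
  refine ⟨hcard, hforb, ?_⟩
  intro x hx hne
  have hmin : T.min.untopD 0 = 0 := by
    have h1 : T.min ≤ (0 : ℕ) := Finset.min_le h0
    have h2 : ((0 : ℕ) : WithTop ℕ) ≤ T.min := zero_le
    have h3 : T.min = ((0 : ℕ) : WithTop ℕ) := le_antisymm h1 h2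
    rw [h3]; rfl
  rw [hmin, add_zero] at hx
  set f : ℕ → ℕ := fun y => 2 * t - 1 - y with hf
  have hdisj : Disjoint T (T.image f) := by
    rw [Finset.disjoint_right]
    intro a ha haT
    obtain ⟨y, hy, rfl⟩ := Finset.mem_image.mp ha
    apply hTT
    rw [Finset.mem_add]
    refine ⟨f y, haT, y, hy, ?_⟩
    have := hlt y hy
    simp only [hf]
    omega
  have hinj : Set.InjOn f T := by
    intro a ha b hb hab
    have := hlt a ha; have := hlt b hb
    simp only [hf] at hab
    omega
  have hcard' : (T ∪ T.image f).card = 2 * t := by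
    rw [Finset.card_union_of_disjoint hdisj, Finset.card_image_of_injOn hinj, hcard]
    omega
  have hsub' : T ∪ T.image f ⊆ Finset.range (2 * t) := by
    intro a ha
    rcases Finset.mem_union.mp ha with h | h
    · exact hsub h
    · obtain ⟨y, hy, rfl⟩ := Finset.mem_image.mp h
      have := hlt y hy
      simp only [hf, Finset.mem_range]
      omega
  have heq : T ∪ T.image f = Finset.range (2 * t) :=
    Finset.eq_of_subset_of_card_le hsub' (by rw [hcard', Finset.card_range])
  have hxmem : x ∈ T ∪ T.image f := by
    rw [heq, Finset.mem_range]; omega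
  rcases Finset.mem_union.mp hxmem with h | h
  · exact Finset.mem_add.mpr ⟨0, h0, x, h, by omega⟩
  · obtain ⟨y, hy, rfl⟩ := Finset.mem_image.mp h
    exact absurd rfl (hne y hy)
end

section
/- For every integer t ≥ 1, the number of t-special sets T ⊆ {0,...,2t-1} with 0 ∈ T equals the number of sets A ⊆ {1,...,t-1} that are closed under addition (x, y ∈ A and x+y ≤ t-1 imply x+y ∈ A) and satisfy 2(t-1)+1 ∉ 3A. -/
open Pointwise

/-- Pairing lemma: for a special `T` containing `0`, exactly one of `x`, `2t-1-x`
belongs to `T`, for every `x < 2t`. -/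
lemma pairing_lemma (t : ℕ) (T : Finset ℕ) (hsub : T ⊆ Finset.range (2 * t))
    (hcard : T.card = t) (h3 : 2 * t - 1 ∉ T + T + T) (h0 : 0 ∈ T) :
    ∀ x < 2 * t, (x ∈ T ↔ 2 * t - 1 - x ∉ T) := by
  have hbd : ∀ x ∈ T, x < 2 * t := fun x hx => Finset.mem_range.mp (hsub hx)
  have fwd : ∀ x ∈ T, 2 * t - 1 - x ∉ T := by
    intro x hx hx'
    apply h3
    have hx2 : x < 2 * t := hbd x hx
    have he : x + (2 * t - 1 - x) + 0 = 2 * t - 1 := by omega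
    rw [← he]
    exact Finset.add_mem_add (Finset.add_mem_add hx hx') h0
  have hdisj : Disjoint T (T.image (fun y => 2 * t - 1 - y)) := by
    rw [Finset.disjoint_left]
    intro x hx hx'
    obtain ⟨y, hy, hyx⟩ := Finset.mem_image.mp hx'
    have hy2 : y < 2 * t := hbd y hy
    have : 2 * t - 1 - x = y := by omega
    exact fwd x hx (this ▸ hy)
  have hkey : T ∪ T.image (fun y => 2 * t - 1 - y) = Finset.range (2 * t) := by
    apply Finset.eq_of_subset_of_card_le
    · intro x hx
      rcases Finset.mem_union.mp hx with h | h
      · exact hsub h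
      · obtain ⟨y, hy, hyx⟩ := Finset.mem_image.mp h
        have hy2 : y < 2 * t := hbd y hy
        have ht1 : 1 ≤ t := by
          rcases Nat.eq_zero_or_pos t with h' | h'
          · exfalso; have := hbd 0 h0; omega
          · exact h'
        exact Finset.mem_range.mpr (by omega)
    · rw [Finset.card_range, Finset.card_union_of_disjoint hdisj,
        Finset.card_image_of_injOn, hcard]
      · omega
      · intro a ha b hb hab
        have := hbd a ha; have := hbd b hb
        simp only at hab
        omega
  intro x hx
  constructor
  · exact fwd x
  · intro h
    by_contra hxT
    have hxR : x ∈ T ∪ T.image (fun y => 2 * t - 1 - y) := by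
      rw [hkey]; exact Finset.mem_range.mpr hx
    rcases Finset.mem_union.mp hxR with h' | h'
    · exact hxT h'
    · obtain ⟨y, hy, hyx⟩ := Finset.mem_image.mp h'
      have hy2 : y < 2 * t := hbd y hy
      have : 2 * t - 1 - x = y := by omega
      exact h (this ▸ hy)

theorem count_special_eq_count_closed (t : ℕ) (ht : 1 ≤ t) :
    Set.ncard {T : Finset ℕ | T ⊆ Finset.range (2 * t) ∧ IsSpecial t T ∧ 0 ∈ T} =
    Set.ncard {A : Finset ℕ | A ⊆ Finset.Icc 1 (t - 1) ∧
      (∀ x ∈ A, ∀ y ∈ A, x + y ≤ t - 1 → x + y ∈ A) ∧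
      2 * (t - 1) + 1 ∉ A + A + A} := by
  classical
  set S1 : Set (Finset ℕ) :=
    {T : Finset ℕ | T ⊆ Finset.range (2 * t) ∧ IsSpecial t T ∧ 0 ∈ T} with hS1
  set S2 : Set (Finset ℕ) :=
    {A : Finset ℕ | A ⊆ Finset.Icc 1 (t - 1) ∧
      (∀ x ∈ A, ∀ y ∈ A, x + y ≤ t - 1 → x + y ∈ A) ∧
      2 * (t - 1) + 1 ∉ A + A + A} with hS2
  set f : Finset ℕ → Finset ℕ := fun T => T ∩ Finset.Icc 1 (t - 1) with hf
  -- injectivity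
  have hinj : Set.InjOn f S1 := by
    have hssub : ∀ T1 ∈ S1, ∀ T2 ∈ S1, f T1 = f T2 → T1 ⊆ T2 := by
      rintro T1 ⟨hsub1, ⟨hcard1, h31, _⟩, h01⟩ T2 ⟨hsub2, ⟨hcard2, h32, _⟩, h02⟩ heq
      have hp1 := pairing_lemma t T1 hsub1 hcard1 h31 h01
      have hp2 := pairing_lemma t T2 hsub2 hcard2 h32 h02
      intro x hx
      have hx2 : x < 2 * t := Finset.mem_range.mp (hsub1 hx)
      rcases Nat.lt_or_ge x t with hlt | hge
      · rcases Nat.eq_zero_or_pos x with h' | h'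
        · exact h' ▸ h02
        · have : x ∈ f T1 := Finset.mem_inter.mpr ⟨hx, Finset.mem_Icc.mpr ⟨h', by omega⟩⟩
          rw [heq] at this
          exact (Finset.mem_inter.mp this).1
      · -- x ≥ t : use pairing
        have h2t1 : 2 * t - 1 ∉ T1 := by
          have := (hp1 0 (by omega)).mp h01
          simpa using this
        have hxne : x ≠ 2 * t - 1 := fun h => h2t1 (h ▸ hx)
        set y := 2 * t - 1 - x with hy
        have hy1 : 1 ≤ y ∧ y ≤ t - 1 := by omega
        have hynT1 : y ∉ T1 := (hp1 x hx2).mp hx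
        have hynT2 : y ∉ T2 := by
          intro hyT2
          have : y ∈ f T2 := Finset.mem_inter.mpr ⟨hyT2, Finset.mem_Icc.mpr ⟨hy1.1, hy1.2⟩⟩
          rw [← heq] at this
          exact hynT1 (Finset.mem_inter.mp this).1
        exact (hp2 x hx2).mpr hynT2
    intro T1 h1 T2 h2 heq
    exact Finset.Subset.antisymm (hssub T1 h1 T2 h2 heq) (hssub T2 h2 T1 h1 heq.symm)
  -- image
  have himg : f '' S1 = S2 := by
    ext A
    constructor
    · rintro ⟨T, ⟨hsub, ⟨hcard, h3, _⟩, h0⟩, rfl⟩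
      have hp := pairing_lemma t T hsub hcard h3 h0
      refine ⟨Finset.inter_subset_right, ?_, ?_⟩
      · intro x hx y hy hxy
        obtain ⟨hxT, hxI⟩ := Finset.mem_inter.mp hx
        obtain ⟨hyT, hyI⟩ := Finset.mem_inter.mp hy
        rw [Finset.mem_Icc] at hxI hyI
        refine Finset.mem_inter.mpr ⟨?_, Finset.mem_Icc.mpr ⟨by omega, hxy⟩⟩
        by_contra hnT
        have hc : 2 * t - 1 - (x + y) ∈ T := by
          by_contra hc
          exact hnT ((hp (x + y) (by omega)).mpr hc)
        apply h3
        have he : x + y + (2 * t - 1 - (x + y)) = 2 * t - 1 := by omega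
        rw [← he]
        exact Finset.add_mem_add (Finset.add_mem_add hxT hyT) hc
      · intro hA
        apply h3
        have h1 : 2 * (t - 1) + 1 = 2 * t - 1 := by omega
        rw [h1] at hA
        have hsub' : (T ∩ Finset.Icc 1 (t-1)) ⊆ T := Finset.inter_subset_left
        exact Finset.add_subset_add (Finset.add_subset_add hsub' hsub') hsub' hA
    · rintro ⟨hA1, hA2, hA3⟩
      have hAmem : ∀ a ∈ A, 1 ≤ a ∧ a ≤ t - 1 := fun a ha => Finset.mem_Icc.mp (hA1 ha)
      set U : Finset ℕ := (Finset.Icc 1 (t - 1) \ A).image (fun a => 2 * t - 1 - a) with hU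
      set T : Finset ℕ := insert 0 (A ∪ U) with hT
      have hUmem : ∀ x, x ∈ U ↔ ∃ a, (1 ≤ a ∧ a ≤ t - 1) ∧ a ∉ A ∧ 2 * t - 1 - a = x := by
        intro x
        simp only [hU, Finset.mem_image, Finset.mem_sdiff, Finset.mem_Icc]
        tauto
      have hUbd : ∀ x ∈ U, t ≤ x ∧ x ≤ 2 * t - 2 := by
        intro x hx
        obtain ⟨a, ⟨ha1, ha2⟩, _, rfl⟩ := (hUmem x).mp hx
        omega
      have hUrefl : ∀ x ∈ U, 2 * t - 1 - x ∉ A ∧ 1 ≤ 2 * t - 1 - x ∧ 2 * t - 1 - x ≤ t - 1 := by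
        intro x hx
        obtain ⟨a, ⟨ha1, ha2⟩, hna, rfl⟩ := (hUmem x).mp hx
        have : 2 * t - 1 - (2 * t - 1 - a) = a := by omega
        rw [this]
        exact ⟨hna, ha1, ha2⟩
      -- classification of elements of T
      have hTmem : ∀ x, x ∈ T ↔ (x = 0 ∨ x ∈ A ∨ x ∈ U) := by
        intro x
        simp [hT, Finset.mem_insert, Finset.mem_union]
      have h0T : (0 : ℕ) ∈ T := by rw [hTmem]; left; rfl
      have hclass : ∀ x ∈ T, ((x = 0 ∨ x ∈ A) ∧ x ≤ t - 1) ∨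
          (t ≤ x ∧ x ≤ 2 * t - 2 ∧ 2 * t - 1 - x ∉ A) := by
        intro x hx
        rcases (hTmem x).mp hx with h | h | h
        · left; exact ⟨Or.inl h, by omega⟩
        · left; exact ⟨Or.inr h, (hAmem x h).2⟩
        · right; exact ⟨(hUbd x h).1, (hUbd x h).2, (hUrefl x h).1⟩
      have hTsub : T ⊆ Finset.range (2 * t) := by
        intro x hx
        rcases hclass x hx with ⟨_, h⟩ | ⟨_, h, _⟩ <;> exact Finset.mem_range.mpr (by omega)
      -- cardinality
      have hdisjAU : Disjoint A U := by
        rw [Finset.disjoint_left]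
        intro x hx hx'
        have := (hAmem x hx).2
        have := (hUbd x hx').1
        omega
      have hAcard : A.card ≤ t - 1 := by
        have := Finset.card_le_card hA1
        simpa [Nat.card_Icc] using this
      have hUcard : U.card = t - 1 - A.card := by
        rw [hU, Finset.card_image_of_injOn, Finset.card_sdiff_of_subset hA1, Nat.card_Icc]
        · omega
        · intro a ha b hb hab
          simp only [Finset.coe_sdiff, Set.mem_diff, Finset.mem_coe, Finset.mem_Icc] at ha hb
          dsimp only at hab
          omega
      have hTcard : T.card = t := by
        rw [hT, Finset.card_insert_of_notMem, Finset.card_union_of_disjoint hdisjAU,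
          hUcard]
        · omega
        · intro h
          rcases Finset.mem_union.mp h with h | h
          · exact absurd (hAmem 0 h).1 (by omega)
          · exact absurd (hUbd 0 h).1 (by omega)
      -- 2t-1 ∉ T+T+T
      have h3T : 2 * t - 1 ∉ T + T + T := by
        intro hmem
        rw [Finset.mem_add] at hmem
        obtain ⟨ab, hab, c, hc, habc⟩ := hmem
        rw [Finset.mem_add] at hab
        obtain ⟨a, ha, b, hb, rfl⟩ := hab
        have hAbd : ∀ x ∈ A, 1 ≤ x ∧ x ≤ t - 1 := hAmem
        rcases hclass a ha with ⟨ha', ha2⟩ | ⟨ha1, ha2, ha3⟩ <;>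
          rcases hclass b hb with ⟨hb', hb2⟩ | ⟨hb1, hb2, hb3⟩ <;>
          rcases hclass c hc with ⟨hc', hc2⟩ | ⟨hc1, hc2, hc3⟩
        · -- all low
          rcases ha' with rfl | haA <;> rcases hb' with rfl | hbA <;>
            rcases hc' with rfl | hcA
          · omega
          · have := hAbd c hcA; omega
          · have := hAbd b hbA; omega
          · have := hAbd b hbA; have := hAbd c hcA; omega
          · have := hAbd a haA; omega
          · have := hAbd a haA; have := hAbd c hcA; omega
          · have := hAbd a haA; have := hAbd b hbA; omega
          · -- all in A
            apply hA3
            have : 2 * (t - 1) + 1 = a + b + c := by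
              have := hAbd a haA; have := hAbd b hbA; have := hAbd c hcA; omega
            rw [this]
            exact Finset.add_mem_add (Finset.add_mem_add haA hbA) hcA
        · -- a,b low, c high
          rcases ha' with rfl | haA <;> rcases hb' with rfl | hbA
          · omega
          · apply hc3
            have := hAbd b hbA
            have : 2 * t - 1 - c = b := by omega
            rw [this]; exact hbA
          · apply hc3
            have := hAbd a haA
            have : 2 * t - 1 - c = a := by omega
            rw [this]; exact haA
          · have h1 := hAbd a haA; have h2 := hAbd b hbA
            apply hc3
            have : 2 * t - 1 - c = a + b := by omega
            rw [this]
            exact hA2 a haA b hbA (by omega)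
        · -- a low, b high, c low
          rcases ha' with rfl | haA <;> rcases hc' with rfl | hcA
          · omega
          · apply hb3
            have := hAbd c hcA
            have : 2 * t - 1 - b = c := by omega
            rw [this]; exact hcA
          · apply hb3
            have := hAbd a haA
            have : 2 * t - 1 - b = a := by omega
            rw [this]; exact haA
          · have h1 := hAbd a haA; have h2 := hAbd c hcA
            apply hb3
            have : 2 * t - 1 - b = a + c := by omega
            rw [this]
            exact hA2 a haA c hcA (by omega)
        · omega
        · -- a high, b,c low
          rcases hb' with rfl | hbA <;> rcases hc' with rfl | hcA
          · omega
          · apply ha3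
            have := hAbd c hcA
            have : 2 * t - 1 - a = c := by omega
            rw [this]; exact hcA
          · apply ha3
            have := hAbd b hbA
            have : 2 * t - 1 - a = b := by omega
            rw [this]; exact hbA
          · have h1 := hAbd b hbA; have h2 := hAbd c hcA
            apply ha3
            have : 2 * t - 1 - a = b + c := by omega
            rw [this]
            exact hA2 b hbA c hcA (by omega)
        · omega
        · omega
        · omega
      -- condition 3
      have hmin : T.min.untopD 0 = 0 := by
        have h1 : T.min ≤ (0 : ℕ) := Finset.min_le h0T
        have h2 : (0 : WithTop ℕ) ≤ T.min := Finset.le_min (fun b hb => by simp)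
        have := le_antisymm h1 h2
        simp [this]
      have hcond3 : ∀ x ≤ 2 * t - 1 + T.min.untopD 0,
          (∀ y ∈ T, 2 * t - 1 - y ≠ x) → x ∈ T + T := by
        rw [hmin]
        intro x hx hno
        have hxT : x ∈ T := by
          by_contra hxT
          rcases Nat.lt_or_ge x t with hlt | hge
          · rcases Nat.eq_zero_or_pos x with rfl | hpos
            · exact hxT h0T
            · -- x ∈ [1,t-1], x ∉ A
              have hxA : x ∉ A := fun h => hxT ((hTmem x).mpr (Or.inr (Or.inl h)))
              have hyU : 2 * t - 1 - x ∈ U := by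
                rw [hUmem]
                exact ⟨x, ⟨hpos, by omega⟩, hxA, rfl⟩
              apply hno (2 * t - 1 - x) ((hTmem _).mpr (Or.inr (Or.inr hyU)))
              omega
          · rcases Nat.lt_or_ge x (2 * t - 1) with hlt2 | hge2
            · set d := 2 * t - 1 - x with hd
              have hd1 : 1 ≤ d ∧ d ≤ t - 1 := by omega
              have hdA : d ∈ A := by
                by_contra hdA
                apply hxT
                rw [hTmem]
                right; right
                rw [hUmem]
                exact ⟨d, ⟨hd1.1, hd1.2⟩, hdA, by omega⟩
              apply hno d ((hTmem d).mpr (Or.inr (Or.inl hdA)))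
              omega
            · have hx21 : x = 2 * t - 1 := by omega
              apply hno 0 h0T
              omega
        have : x + 0 = x := by omega
        rw [← this]
        exact Finset.add_mem_add hxT h0T
      refine ⟨T, ⟨hTsub, ⟨hTcard, h3T, hcond3⟩, h0T⟩, ?_⟩
      -- f T = A
      simp only [hf]
      ext x
      simp only [Finset.mem_inter, Finset.mem_Icc]
      constructor
      · rintro ⟨hxT, hx1, hx2⟩
        rcases (hTmem x).mp hxT with rfl | h | h
        · omega
        · exact h
        · have := (hUbd x h).1; omega
      · intro hx
        exact ⟨(hTmem x).mpr (Or.inr (Or.inl hx)), (hAmem x hx).1, (hAmem x hx).2⟩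
  rw [← himg, Set.ncard_image_of_injOn hinj]
end

section
/- For every integer n ≥ 1, the number of sets A ⊆ {1,...,n} that are closed under addition (x, y ∈ A with x + y ≤ n implies x + y ∈ A) and satisfy 2n+1 ∉ 3A is at most the number of sum-free sets D ⊆ {1,...,n} with 2n+1 ∉ ∑D. -/
open Pointwise

-- sums of nonempty lists of elements of A with sum ≤ n are in A
private lemma listsum_mem (n : ℕ) (A : Finset ℕ)
    (hcl : ∀ x ∈ A, ∀ y ∈ A, x + y ≤ n → x + y ∈ A) :
    ∀ l : List ℕ, l ≠ [] → (∀ x ∈ l, x ∈ A) → l.sum ≤ n → l.sum ∈ A := by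
  intro l
  induction l with
  | nil => intro h; exact absurd rfl h
  | cons a t ih =>
    intro _ hmem hle
    rcases eq_or_ne t [] with rfl | ht
    · simpa using hmem a (by simp)
    · have htA : ∀ x ∈ t, x ∈ A := fun x hx => hmem x (List.mem_cons_of_mem _ hx)
      have hts : t.sum ∈ A := ih ht htA (le_trans (Nat.le_add_left _ _) (by simpa using hle))
      have := hcl a (hmem a (by simp)) t.sum hts (by simpa using hle)
      simpa using this

-- every element of A is a nonempty sum of generators
private lemma span (n : ℕ) (A : Finset ℕ) (hA : A ⊆ Finset.Icc 1 n) :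
    ∀ a ∈ A, ∃ l : List ℕ, l ≠ [] ∧ (∀ x ∈ l, x ∈ A \ (A + A)) ∧ l.sum = a := by
  intro a
  induction a using Nat.strong_induction_on with
  | _ a ih =>
    intro ha
    by_cases hgen : a ∈ A + A
    · rw [Finset.mem_add] at hgen
      obtain ⟨x, hx, y, hy, hxy⟩ := hgen
      have hx1 : 1 ≤ x := (Finset.mem_Icc.mp (hA hx)).1
      have hy1 : 1 ≤ y := (Finset.mem_Icc.mp (hA hy)).1
      obtain ⟨l1, hl1ne, hl1mem, hl1sum⟩ := ih x (by omega) hx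
      obtain ⟨l2, _, hl2mem, hl2sum⟩ := ih y (by omega) hy
      refine ⟨l1 ++ l2, by simp [hl1ne], ?_, by simp [hl1sum, hl2sum, hxy]⟩
      intro z hz
      rcases List.mem_append.mp hz with h | h
      · exact hl1mem z h
      · exact hl2mem z h
    · exact ⟨[a], by simp, by simp [Finset.mem_sdiff, ha, hgen], by simp⟩

-- no list of elements of A sums to 2n+1
private lemma key (n : ℕ) (A : Finset ℕ) (hA : A ⊆ Finset.Icc 1 n)
    (hcl : ∀ x ∈ A, ∀ y ∈ A, x + y ≤ n → x + y ∈ A)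
    (h3 : 2 * n + 1 ∉ A + A + A) :
    ∀ k : ℕ, ∀ l : List ℕ, l.length = k → (∀ x ∈ l, x ∈ A) → l.sum ≠ 2 * n + 1 := by
  intro k
  induction k using Nat.strong_induction_on with
  | _ k ih =>
    intro l hlen hmem hsum
    -- sort l
    set s := Multiset.sort (↑l : Multiset ℕ) (· ≤ ·) with hs
    have hperm : List.Perm s l := Multiset.coe_eq_coe.mp (Multiset.sort_eq _ _)
    have hsorted : List.Pairwise (· ≤ ·) s := Multiset.pairwise_sort _ _
    have hssum : s.sum = 2 * n + 1 := hperm.sum_eq.trans hsum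
    have hslen : s.length = k := hperm.length_eq.trans hlen
    have hsmem : ∀ x ∈ s, x ∈ A := fun x hx => hmem x (hperm.mem_iff.mp hx)
    have hbd : ∀ x ∈ s, 1 ≤ x ∧ x ≤ n := fun x hx => Finset.mem_Icc.mp (hA (hsmem x hx))
    match s, hsorted, hssum, hslen, hsmem, hbd with
    | [], _, hssum, _, _, _ => simp at hssum
    | [a], _, hssum, _, _, hbd =>
      have := hbd a (by simp); simp at hssum; omega
    | [a, b], _, hssum, _, _, hbd =>
      have h1 := hbd a (by simp); have h2 := hbd b (by simp)
      simp at hssum; omega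
    | [a, b, c], _, hssum, _, hsmem, _ =>
      refine absurd ?_ h3
      have habc : a + b + c = 2 * n + 1 := by simp at hssum; omega
      rw [Finset.mem_add]
      exact ⟨a + b, Finset.add_mem_add (hsmem a (by simp)) (hsmem b (by simp)),
        c, hsmem c (by simp), habc⟩
    | a :: b :: c :: d :: rest, hsorted, hssum, hslen, hsmem, hbd =>
      have h1 := List.pairwise_cons.mp hsorted
      have h2 := List.pairwise_cons.mp h1.2
      have hab : a ≤ b := h1.1 b (by simp)
      have hbc : b ≤ c := h2.1 c (by simp)
      have hbd' : b ≤ d := h2.1 d (by simp)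
      have ha1 := hbd a (by simp)
      have hsum' : a + b + c + d + rest.sum = 2 * n + 1 := by
        simp at hssum; omega
      have habn : a + b ≤ n := by omega
      have habA : a + b ∈ A := hcl a (hsmem a (by simp)) b (hsmem b (by simp)) habn
      have hk : rest.length + 4 = k := by simpa using hslen
      refine ih (k - 1) (by omega) ((a + b) :: c :: d :: rest) (by simp; omega)
        ?_ (by simp at hssum ⊢; omega)
      intro x hx
      rcases List.mem_cons.mp hx with rfl | hx
      · exact habA
      · exact hsmem x (by simp at hx ⊢; tauto)

theorem count_closed_le_count_sumfree (n : ℕ) (hn : 1 ≤ n) :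
    Set.ncard {A : Finset ℕ | A ⊆ Finset.Icc 1 n ∧
      (∀ x ∈ A, ∀ y ∈ A, x + y ≤ n → x + y ∈ A) ∧
      2 * n + 1 ∉ A + A + A} ≤
    Set.ncard {D : Finset ℕ | D ⊆ Finset.Icc 1 n ∧
      (∀ x ∈ D, ∀ y ∈ D, x + y ∉ D) ∧
      (∀ (k : ℕ) (f : Fin k → ℕ), (∀ i, f i ∈ D) → ∑ i, f i ≠ 2 * n + 1)} := by
  classical
  set S := {A : Finset ℕ | A ⊆ Finset.Icc 1 n ∧
      (∀ x ∈ A, ∀ y ∈ A, x + y ≤ n → x + y ∈ A) ∧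
      2 * n + 1 ∉ A + A + A}
  set T := {D : Finset ℕ | D ⊆ Finset.Icc 1 n ∧
      (∀ x ∈ D, ∀ y ∈ D, x + y ∉ D) ∧
      (∀ (k : ℕ) (f : Fin k → ℕ), (∀ i, f i ∈ D) → ∑ i, f i ≠ 2 * n + 1)}
  have hTfin : T.Finite := by
    apply Set.Finite.subset (Set.finite_Iic (Finset.Icc 1 n))
    intro D hD
    exact hD.1
  refine Set.ncard_le_ncard_of_injOn (fun A => A \ (A + A)) ?_ ?_ hTfin
  · -- maps into T
    rintro A ⟨hA, hcl, h3⟩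
    refine ⟨fun x hx => hA (Finset.mem_sdiff.mp hx).1, ?_, ?_⟩
    · intro x hx y hy hxy
      rw [Finset.mem_sdiff] at hx hy hxy
      exact hxy.2 (Finset.add_mem_add hx.1 hy.1)
    · intro k f hf hsum
      refine key n A hA hcl h3 k (List.ofFn f) (by simp) ?_ (by rw [List.sum_ofFn]; exact hsum)
      intro x hx
      rw [List.mem_ofFn] at hx
      obtain ⟨i, rfl⟩ := hx
      exact (Finset.mem_sdiff.mp (hf i)).1
  · -- injective
    rintro A ⟨hA, hclA, _⟩ B ⟨hB, hclB, _⟩ hDeq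
    have main : ∀ (A B : Finset ℕ), A ⊆ Finset.Icc 1 n →
        (∀ x ∈ B, ∀ y ∈ B, x + y ≤ n → x + y ∈ B) →
        A \ (A + A) = B \ (B + B) → A ⊆ B := by
      intro A B hA hclB heq a ha
      obtain ⟨l, hlne, hlmem, hlsum⟩ := span n A hA a ha
      have han : a ≤ n := (Finset.mem_Icc.mp (hA ha)).2
      have : l.sum ∈ B := by
        apply listsum_mem n B hclB l hlne ?_ (by omega)
        intro x hx
        have := hlmem x hx
        rw [heq, Finset.mem_sdiff] at this
        exact this.1
      rwa [hlsum] at this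
    exact Finset.Subset.antisymm (main A B hA hclB hDeq) (main B A hB hclA hDeq.symm)
end

section
/- Let x₁, ..., x_k (k ≥ 3) be positive integers with x₁ + ... + x_k = 2n+1 for a positive integer n, and each xᵢ ≤ n. Then the indices {1,...,k} can be partitioned into 3 nonempty-or-empty blocks such that the sum of the xᵢ in each block is at most n. -/
theorem partition_into_three_blocks (n k : ℕ) (hn : 0 < n) (hk : 3 ≤ k)
    (x : Fin k → ℕ) (hx : ∀ i, x i ∈ Finset.Icc 1 n)
    (hsum : ∑ i, x i = 2 * n + 1) :
    ∃ P : Fin k → Fin 3, ∀ j : Fin 3,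
      ∑ i ∈ Finset.univ.filter (fun i => P i = j), x i ≤ n := by
  set S : ℕ → ℕ := fun m => ∑ i ∈ Finset.univ.filter (fun i : Fin k => (i : ℕ) < m), x i with hS
  have hS0 : S 0 = 0 := by simp [hS]
  have hSk : S k = 2 * n + 1 := by
    rw [← hsum, hS]
    apply Finset.sum_congr _ (fun _ _ => rfl)
    ext i; simp [i.isLt]
  have hstep : ∀ m (hm : m < k), S (m + 1) = S m + x ⟨m, hm⟩ := by
    intro m hm
    have hins : Finset.univ.filter (fun i : Fin k => (i : ℕ) < m + 1)
        = insert ⟨m, hm⟩ (Finset.univ.filter (fun i : Fin k => (i : ℕ) < m)) := by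
      ext i
      simp [Nat.lt_succ_iff_lt_or_eq, Fin.ext_iff, or_comm]
      omega
    simp only [hS]
    rw [hins, Finset.sum_insert (by simp)]
    ring
  set a : ℕ := Nat.findGreatest (fun m => S m ≤ n) k with ha
  have haP : S a ≤ n := Nat.findGreatest_spec (P := fun m => S m ≤ n) (Nat.zero_le k) (by simp [hS0])
  have hak : a ≤ k := Nat.findGreatest_le k
  have haltk : a < k := by
    rcases lt_or_eq_of_le hak with h | h
    · exact h
    · rw [h, hSk] at haP; omega
  have hSa1 : ¬ S (a + 1) ≤ n :=
    Nat.findGreatest_is_greatest (P := fun m => S m ≤ n) (Nat.lt_succ_self a) haltk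
  have hSa1' : S (a + 1) = S a + x ⟨a, haltk⟩ := hstep a haltk
  refine ⟨fun i => if (i : ℕ) < a then 0 else if (i : ℕ) = a then 1 else 2, ?_⟩
  intro j
  fin_cases j
  · have : (Finset.univ.filter fun i : Fin k =>
        (if (i : ℕ) < a then (0 : Fin 3) else if (i : ℕ) = a then 1 else 2) = 0)
        = Finset.univ.filter (fun i : Fin k => (i : ℕ) < a) := by
      ext i
      by_cases h1 : (i : ℕ) < a <;> by_cases h2 : (i : ℕ) = a <;> simp [h1, h2]
    show ∑ i ∈ Finset.univ.filter (fun i : Fin k => (if (i : ℕ) < a then (0 : Fin 3) else if (i : ℕ) = a then 1 else 2) = 0), x i ≤ n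
    rw [this]
    exact haP
  · have : (Finset.univ.filter fun i : Fin k =>
        (if (i : ℕ) < a then (0 : Fin 3) else if (i : ℕ) = a then 1 else 2) = 1)
        = {⟨a, haltk⟩} := by
      ext i
      by_cases h1 : (i : ℕ) < a <;> by_cases h2 : (i : ℕ) = a <;>
        simp [h1, h2, Fin.ext_iff] <;> omega
    show ∑ i ∈ Finset.univ.filter (fun i : Fin k => (if (i : ℕ) < a then (0 : Fin 3) else if (i : ℕ) = a then 1 else 2) = 1), x i ≤ n
    rw [this, Finset.sum_singleton]
    exact (Finset.mem_Icc.mp (hx _)).2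
  · have hfil : (Finset.univ.filter fun i : Fin k =>
        (if (i : ℕ) < a then (0 : Fin 3) else if (i : ℕ) = a then 1 else 2) = 2)
        = Finset.univ.filter (fun i : Fin k => ¬ (i : ℕ) < a + 1) := by
      ext i
      by_cases h1 : (i : ℕ) < a <;> by_cases h2 : (i : ℕ) = a <;>
        simp [h1, h2] <;> omega
    have hsplit := Finset.sum_filter_add_sum_filter_not Finset.univ
      (fun i : Fin k => (i : ℕ) < a + 1) x
    rw [hsum] at hsplit
    show ∑ i ∈ Finset.univ.filter (fun i : Fin k => (if (i : ℕ) < a then (0 : Fin 3) else if (i : ℕ) = a then 1 else 2) = 2), x i ≤ n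
    rw [hfil]
    have : S (a + 1) ≥ n + 1 := by omega
    change S (a+1) + _ = _ at hsplit
    omega
end
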